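/- Let H be a real inner product space, let b ∈ (0,1], a ∈ [0,1], and let x₀, x₁, y₀, y₁ ∈ H. Let x' = (1−a)x₀ + a·x₁. Then ‖y₁ − x'‖² ≥ (1−b)·‖y₀−y₁‖² − ((1−a)(1−b)/b)·‖y₀−x₀‖² − (a(1−b)/b)·‖y₀−x₁‖² + ((1−a)a(1−b)/b)·‖x₀−x₁‖². -/
import Mathlib

open RealInnerProductSpace

lemma norm_sq_inner {H : Type*} [NormedAddCommGroup H] [InnerProductSpace ℝ H]
    (w : H) : ‖w‖ ^ 2 = ⟪w, w⟫ := by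
  rw [real_inner_self_eq_norm_sq]

theorem ineq_3_8 {H : Type*} [NormedAddCommGroup H] [InnerProductSpace ℝ H]
    (a b : ℝ) (hb0 : 0 < b) (hb1 : b ≤ 1) (ha0 : 0 ≤ a) (ha1 : a ≤ 1)
    (x₀ x₁ y₀ y₁ : H) :
    ‖y₁ - ((1 - a) • x₀ + a • x₁)‖ ^ 2 ≥
      (1 - b) * ‖y₀ - y₁‖ ^ 2 - ((1 - a) * (1 - b) / b) * ‖y₀ - x₀‖ ^ 2 -
        (a * (1 - b) / b) * ‖y₀ - x₁‖ ^ 2 +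
        ((1 - a) * a * (1 - b) / b) * ‖x₀ - x₁‖ ^ 2 := by
  set x' : H := (1 - a) • x₀ + a • x₁ with hx'
  -- key identity: ‖y₀ - x'‖² = (1-a)‖y₀-x₀‖² + a‖y₀-x₁‖² - (1-a)a‖x₀-x₁‖²
  have key2 : ‖y₀ - x'‖ ^ 2
      = (1 - a) * ‖y₀ - x₀‖ ^ 2 + a * ‖y₀ - x₁‖ ^ 2
        - (1 - a) * a * ‖x₀ - x₁‖ ^ 2 := by
    have h : y₀ - x' = (1 - a) • (y₀ - x₀) + a • (y₀ - x₁) := by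
      rw [hx']
      module
    rw [h, norm_sq_inner, norm_sq_inner, norm_sq_inner, norm_sq_inner]
    simp only [inner_add_add_self, real_inner_smul_left, real_inner_smul_right,
      inner_sub_sub_self, real_inner_comm (y₀ - x₀) (y₀ - x₁)]
    have hcomm : ⟪x₀, y₀⟫ = ⟪y₀, x₀⟫ := real_inner_comm _ _
    have hcomm2 : ⟪x₁, y₀⟫ = ⟪y₀, x₁⟫ := real_inner_comm _ _
    have hcomm3 : ⟪x₁, x₀⟫ = ⟪x₀, x₁⟫ := real_inner_comm _ _
    simp only [inner_sub_sub_self, inner_sub_left, inner_sub_right]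
    ring_nf
    nlinarith [hcomm, hcomm2, hcomm3]
  -- key inequality: b(1-b)‖u+v‖² ≤ b‖v‖² + (1-b)‖u‖² with u = y₀ - x', v = x' - y₁
  have key1 : b * (1 - b) * ‖y₀ - y₁‖ ^ 2
      ≤ b * ‖y₁ - x'‖ ^ 2 + (1 - b) * ‖y₀ - x'‖ ^ 2 := by
    have h : y₀ - y₁ = (y₀ - x') + (x' - y₁) := by abel
    have hnv : ‖y₁ - x'‖ = ‖x' - y₁‖ := norm_sub_rev _ _
    rw [h, hnv]
    set u := y₀ - x'
    set v := x' - y₁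
    have e1 : ‖u + v‖ ^ 2 = ‖u‖ ^ 2 + 2 * ⟪u, v⟫ + ‖v‖ ^ 2 := norm_add_sq_real u v
    have e2 : (0:ℝ) ≤ ‖(1 - b) • u - b • v‖ ^ 2 := sq_nonneg _
    have e3 : ‖(1 - b) • u - b • v‖ ^ 2
        = (1 - b) ^ 2 * ‖u‖ ^ 2 - 2 * ((1 - b) * b) * ⟪u, v⟫ + b ^ 2 * ‖v‖ ^ 2 := by
      rw [norm_sq_inner, norm_sq_inner, norm_sq_inner]
      simp only [inner_sub_sub_self, real_inner_smul_left, real_inner_smul_right,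
        real_inner_comm v u]
      ring
    nlinarith [e1, e2, e3]
  -- combine
  rw [ge_iff_le]
  have hb' : b ≠ 0 := ne_of_gt hb0
  rw [div_mul_eq_mul_div, div_mul_eq_mul_div, div_mul_eq_mul_div]
  rw [← sub_nonneg]
  have expand : ‖y₁ - x'‖ ^ 2 -
      ((1 - b) * ‖y₀ - y₁‖ ^ 2 - (1 - a) * (1 - b) * ‖y₀ - x₀‖ ^ 2 / b -
        a * (1 - b) * ‖y₀ - x₁‖ ^ 2 / b + (1 - a) * a * (1 - b) * ‖x₀ - x₁‖ ^ 2 / b)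
      = (b * ‖y₁ - x'‖ ^ 2 + (1 - b) * ‖y₀ - x'‖ ^ 2 - b * (1 - b) * ‖y₀ - y₁‖ ^ 2) / b := by
    rw [key2]
    field_simp
    ring
  rw [expand]
  apply div_nonneg _ (le_of_lt hb0)
  linarith [key1]
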